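/- Let J = [[1, 1, 0], [−1, 0, 0], [0, 0, 1]] and K = [[1, 1, 0], [−1, 0, 1], [0, 1, 0]], as matrices in GL₃(ℂ). Then the projective transformations of ℂP² induced by J⁻¹·Jᵀ and by K⁻¹·Kᵀ have infinite order: for every integer s ≥ 1, neither (J⁻¹·Jᵀ)^s nor (K⁻¹·Kᵀ)^s is a scalar multiple of the identity matrix. -/

import Mathlib

lemma powA (s : ℕ) :
    (!![-1,0,0;2,-1,0;0,0,1] : Matrix (Fin 3) (Fin 3) ℂ) ^ s
      = !![(-1:ℂ)^s,0,0; (-1:ℂ)^(s+1)*(2*(s:ℂ)),(-1:ℂ)^s,0; 0,0,1] := by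
  induction s with
  | zero => norm_num; exact Matrix.one_fin_three
  | succ n ih =>
      rw [pow_succ, ih, Matrix.mul_fin_three]
      ext i j
      fin_cases i <;> fin_cases j <;> push_cast [pow_succ] <;> simp <;> ring

lemma powB (s : ℕ) :
    (!![1,-2,0;0,1,0;2,-2,1] : Matrix (Fin 3) (Fin 3) ℂ) ^ s
      = !![1,-2*(s:ℂ),0;0,1,0;2*(s:ℂ),-2*(s:ℂ)^2,1] := by
  induction s with
  | zero => norm_num; exact Matrix.one_fin_three
  | succ n ih =>
      rw [pow_succ, ih, Matrix.mul_fin_three]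
      ext i j
      fin_cases i <;> fin_cases j <;> push_cast <;> simp <;> ring

theorem stmt_10 (J K : Matrix (Fin 3) (Fin 3) ℂ)
    (hJ : J = !![1, 1, 0; -1, 0, 0; 0, 0, 1])
    (hK : K = !![1, 1, 0; -1, 0, 1; 0, 1, 0]) :
    ∀ s : ℕ, 1 ≤ s →
      (∀ c : ℂ, (J⁻¹ * J.transpose) ^ s ≠ c • (1 : Matrix (Fin 3) (Fin 3) ℂ)) ∧
      (∀ c : ℂ, (K⁻¹ * K.transpose) ^ s ≠ c • (1 : Matrix (Fin 3) (Fin 3) ℂ)) := by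
  have hJdet : J.det ≠ 0 := by subst hJ; norm_num [Matrix.det_fin_three, Matrix.cons_val_two]
  have hKdet : K.det ≠ 0 := by subst hK; norm_num [Matrix.det_fin_three, Matrix.cons_val_two]
  have hJm : J * (!![-1,0,0;2,-1,0;0,0,1] : Matrix (Fin 3) (Fin 3) ℂ) = J.transpose := by
    subst hJ
    ext i j
    fin_cases i <;> fin_cases j <;>
      norm_num [Matrix.mul_apply, Fin.sum_univ_three, Matrix.transpose_apply, Matrix.vecHead, Matrix.vecTail, Matrix.cons_val_two]
  have hKm : K * (!![1,-2,0;0,1,0;2,-2,1] : Matrix (Fin 3) (Fin 3) ℂ) = K.transpose := by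
    subst hK
    ext i j
    fin_cases i <;> fin_cases j <;>
      norm_num [Matrix.mul_apply, Fin.sum_univ_three, Matrix.transpose_apply, Matrix.vecHead, Matrix.vecTail, Matrix.cons_val_two]
  have hJA : J⁻¹ * J.transpose = (!![-1,0,0;2,-1,0;0,0,1] : Matrix (Fin 3) (Fin 3) ℂ) := by
    rw [← hJm, ← Matrix.mul_assoc, Matrix.nonsing_inv_mul _ (isUnit_iff_ne_zero.2 hJdet), Matrix.one_mul]
  have hKB : K⁻¹ * K.transpose = (!![1,-2,0;0,1,0;2,-2,1] : Matrix (Fin 3) (Fin 3) ℂ) := by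
    rw [← hKm, ← Matrix.mul_assoc, Matrix.nonsing_inv_mul _ (isUnit_iff_ne_zero.2 hKdet), Matrix.one_mul]
  intro s hs
  have hsC : (s : ℂ) ≠ 0 := Nat.cast_ne_zero.2 (by omega)
  constructor
  · intro c h
    rw [hJA, powA] at h
    have h10 := congrFun (congrFun h 1) 0
    simp [Matrix.one_apply] at h10
    have : ((-1:ℂ))^(s+1) * (2*(s:ℂ)) ≠ 0 := by
      apply mul_ne_zero (pow_ne_zero _ (by norm_num)) (by simpa using hsC)
    exact this (by simpa using h10)
  · intro c h
    rw [hKB, powB] at h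
    have h20 := congrFun (congrFun h 2) 0
    simp [Matrix.one_apply] at h20
    have : (2:ℂ)*(s:ℂ) ≠ 0 := mul_ne_zero (by norm_num) hsC
    exact this (by simpa using h20)
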